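/- Fix pairwise distinct λ_1,…,λ_N ∈ ℂ and regard H_i as the polynomial function of the variables a = (a_j^α)_{1≤j≤N, α∈{1,2,3}} ∈ ℂ^{3N} given by H_i(a) = Σ_{j≠i} Σ_{α=1}^3 a_i^α a_j^α/(λ_j − λ_i). Then, with respect to the Poisson bracket {F,G}(a) = Σ_{k=1}^N Σ_{α,β,γ} ε^{αβγ} a_k^γ (∂F/∂a_k^α)(∂G/∂a_k^β), where ε^{αβγ} is the totally antisymmetric Levi-Civita symbol with ε^{123} = 1, all the Hamiltonians Poisson-commute: {H_i, H_j} = 0 for all i, j. -/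

import Mathlib

/-- The totally antisymmetric Levi-Civita symbol `ε^{αβγ}` on three indices,
with `ε^{123} = 1`. -/
def levicivita : Fin 3 → Fin 3 → Fin 3 → ℂ := fun a b c =>
  if (a = 0 ∧ b = 1 ∧ c = 2) ∨ (a = 1 ∧ b = 2 ∧ c = 0) ∨ (a = 2 ∧ b = 0 ∧ c = 1) then 1
  else if (a = 0 ∧ b = 2 ∧ c = 1) ∨ (a = 2 ∧ b = 1 ∧ c = 0) ∨ (a = 1 ∧ b = 0 ∧ c = 2) then -1
  else 0

/-- The Lie–Poisson bracket of `sl(2,ℂ)^N` in the coordinates `a = (a_k^α)`: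
`{F,G}(a) = Σ_k Σ_{α,β,γ} ε^{αβγ} a_k^γ (∂F/∂a_k^α)(∂G/∂a_k^β)`. -/
noncomputable def poissonBracket {N : ℕ} (F G : (Fin N → Fin 3 → ℂ) → ℂ)
    (a : Fin N → Fin 3 → ℂ) : ℂ :=
  ∑ k : Fin N, ∑ α : Fin 3, ∑ β : Fin 3, ∑ γ : Fin 3,
    levicivita α β γ * a k γ *
      fderiv ℂ F a (Pi.single k (Pi.single α 1)) *
      fderiv ℂ G a (Pi.single k (Pi.single β 1))

/-! ### Auxiliary lemmas about the scalar triple product -/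

/-- The scalar triple product `Σ ε^{αβγ} z^γ x^α y^β`. -/
noncomputable def Strip (x y z : Fin 3 → ℂ) : ℂ :=
  ∑ α : Fin 3, ∑ β : Fin 3, ∑ γ : Fin 3, levicivita α β γ * z γ * x α * y β

lemma S_eval (x y z : Fin 3 → ℂ) : Strip x y z =
    z 2 * x 0 * y 1 - z 1 * x 0 * y 2 + z 0 * x 1 * y 2
      - z 2 * x 1 * y 0 + z 1 * x 2 * y 0 - z 0 * x 2 * y 1 := by
  simp [Strip, Fin.sum_univ_three, levicivita]
  ring

lemma S_swap13 (x y z : Fin 3 → ℂ) : Strip x y z = -Strip z y x := by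
  simp only [S_eval]; ring

lemma S_swap23 (x y z : Fin 3 → ℂ) : Strip x y z = -Strip x z y := by
  simp only [S_eval]; ring

lemma S_swap12 (x y z : Fin 3 → ℂ) : Strip x y z = -Strip y x z := by
  simp only [S_eval]; ring

lemma S_self12 (x z : Fin 3 → ℂ) : Strip x x z = 0 := by
  simp only [S_eval]; ring

lemma S_mulc_left (x y z : Fin 3 → ℂ) (c : ℂ) :
    Strip (fun δ => x δ * c) y z = Strip x y z * c := by
  simp only [S_eval]; ring

lemma S_mulc_mid (x y z : Fin 3 → ℂ) (c : ℂ) :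
    Strip x (fun δ => y δ * c) z = Strip x y z * c := by
  simp only [S_eval]; ring

lemma S_add_left (x x' y z : Fin 3 → ℂ) :
    Strip (fun δ => x δ + x' δ) y z = Strip x y z + Strip x' y z := by
  simp only [S_eval]; ring

lemma S_sum_left {ι : Type*} (s : Finset ι) (f : ι → Fin 3 → ℂ) (y z : Fin 3 → ℂ) :
    Strip (fun δ => ∑ l ∈ s, f l δ) y z = ∑ l ∈ s, Strip (f l) y z := by
  induction s using Finset.cons_induction with
  | empty =>
      simp only [Finset.sum_empty]
      simp [S_eval]
  | cons a s ha ih =>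
      rw [show (fun δ => ∑ l ∈ Finset.cons a s ha, f l δ)
            = fun δ => f a δ + ∑ l ∈ s, f l δ from funext fun δ => Finset.sum_cons ha,
        S_add_left, ih, Finset.sum_cons]

/-! ### Derivatives of the Hamiltonians -/

/-- Evaluation of the coordinate `a k β` as a continuous linear map. -/
noncomputable def Ecoord (N : ℕ) (m : Fin N) (β : Fin 3) : (Fin N → Fin 3 → ℂ) →L[ℂ] ℂ :=
  (ContinuousLinearMap.proj (R := ℂ) (φ := fun _ : Fin 3 => ℂ) β).comp
    (ContinuousLinearMap.proj (R := ℂ) (φ := fun _ : Fin N => Fin 3 → ℂ) m)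

lemma Ecoord_single {N : ℕ} (m k : Fin N) (β δ : Fin 3) :
    Ecoord N m β (Pi.single k (Pi.single δ 1)) = if m = k ∧ β = δ then 1 else 0 := by
  show (Pi.single k (Pi.single δ 1) : Fin N → Fin 3 → ℂ) m β = _
  rcases eq_or_ne m k with h | h <;> rcases eq_or_ne β δ with h2 | h2 <;>
    simp [h, h2, Pi.single_apply]

/-- The partial derivatives of the Schlesinger Hamiltonian `H_i`. -/
noncomputable def Dfun {N : ℕ} (lam : Fin N → ℂ) (a : Fin N → Fin 3 → ℂ)
    (i k : Fin N) (δ : Fin 3) : ℂ :=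
  if k = i then ∑ l ∈ Finset.univ.filter (· ≠ i), a l δ * (lam l - lam i)⁻¹
  else a i δ * (lam k - lam i)⁻¹

lemma hasFDerivAt_H {N : ℕ} (lam : Fin N → ℂ) (i : Fin N) (a : Fin N → Fin 3 → ℂ) :
    HasFDerivAt (fun a : Fin N → Fin 3 → ℂ => ∑ j ∈ Finset.univ.filter (· ≠ i), ∑ α : Fin 3,
        a i α * a j α * (lam j - lam i)⁻¹)
      (∑ j ∈ Finset.univ.filter (· ≠ i), ∑ α : Fin 3,
        (lam j - lam i)⁻¹ • (a i α • Ecoord N j α + a j α • Ecoord N i α)) a := by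
  refine HasFDerivAt.fun_sum fun j _ => HasFDerivAt.fun_sum fun α _ => ?_
  have h := ((Ecoord N i α).hasFDerivAt (x := a)).mul ((Ecoord N j α).hasFDerivAt (x := a))
  exact h.mul_const (lam j - lam i)⁻¹

lemma Deval {N : ℕ} (i k : Fin N) (δ : Fin 3) (lam : Fin N → ℂ) (a : Fin N → Fin 3 → ℂ) :
    (∑ j ∈ Finset.univ.filter (· ≠ i), ∑ α : Fin 3,
        (lam j - lam i)⁻¹ • (a i α • Ecoord N j α + a j α • Ecoord N i α))
      (Pi.single k (Pi.single δ 1)) = Dfun lam a i k δ := by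
  rw [ContinuousLinearMap.sum_apply, Dfun]
  rcases eq_or_ne k i with hk | hk
  · subst hk
    rw [if_pos rfl]
    refine Finset.sum_congr rfl fun j hj => ?_
    have hj' : j ≠ k := by simpa using hj
    rw [ContinuousLinearMap.sum_apply]
    simp [Ecoord_single, hj', Ne.symm hj', Finset.sum_ite_eq', mul_comm]
  · rw [if_neg hk]
    have : ∀ j ∈ Finset.univ.filter (· ≠ i), (∑ α : Fin 3,
        (lam j - lam i)⁻¹ • (a i α • Ecoord N j α + a j α • Ecoord N i α))
          (Pi.single k (Pi.single δ 1))
        = if j = k then a i δ * (lam k - lam i)⁻¹ else 0 := by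
      intro j hj
      rw [ContinuousLinearMap.sum_apply]
      rcases eq_or_ne j k with hjk | hjk
      · subst hjk
        simp [Ecoord_single, hk, Ne.symm hk, Finset.sum_ite_eq', mul_comm]
      · simp [Ecoord_single, hjk, Ne.symm hk]
    rw [Finset.sum_congr rfl this, Finset.sum_ite_eq']
    rw [if_pos (by simp [hk])]

/-! ### Main theorem -/

/-- For pairwise distinct `λ_1,…,λ_N`, the Schlesinger Hamiltonians
`H_i(a) = Σ_{j≠i} Σ_α a_i^α a_j^α/(λ_j − λ_i)` Poisson-commute with respect to the
Lie–Poisson bracket: `{H_i, H_j} = 0` for all `i, j`. -/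
theorem hamiltonians_poisson_commute (N : ℕ) (lam : Fin N → ℂ)
    (hdist : ∀ i j : Fin N, i ≠ j → lam i ≠ lam j)
    (H : Fin N → (Fin N → Fin 3 → ℂ) → ℂ)
    (hH : ∀ i, ∀ a : Fin N → Fin 3 → ℂ, H i a =
      ∑ j ∈ Finset.univ.filter (· ≠ i), ∑ α : Fin 3,
        a i α * a j α / (lam j - lam i)) :
    ∀ i j : Fin N, ∀ a : Fin N → Fin 3 → ℂ, poissonBracket (H i) (H j) a = 0 := by
  intro i j a
  -- compute the partial derivatives of the Hamiltonians
  have hfd : ∀ i' : Fin N, ∀ k : Fin N, ∀ δ : Fin 3,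
      fderiv ℂ (H i') a (Pi.single k (Pi.single δ 1)) = Dfun lam a i' k δ := by
    intro i' k δ
    have he : H i' = fun a : Fin N → Fin 3 → ℂ =>
        ∑ j' ∈ Finset.univ.filter (· ≠ i'), ∑ α : Fin 3,
          a i' α * a j' α * (lam j' - lam i')⁻¹ := by
      funext b
      rw [hH]
      simp [div_eq_mul_inv]
    rw [he, (hasFDerivAt_H lam i' a).fderiv]
    exact Deval i' k δ lam a
  have hPB : poissonBracket (H i) (H j) a
      = ∑ k : Fin N, Strip (Dfun lam a i k) (Dfun lam a j k) (a k) := by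
    have : poissonBracket (H i) (H j) a = ∑ k : Fin N, ∑ α : Fin 3, ∑ β : Fin 3, ∑ γ : Fin 3,
        levicivita α β γ * a k γ * Dfun lam a i k α * Dfun lam a j k β := by
      unfold poissonBracket
      simp only [hfd]
    rw [this]
    rfl
  rw [hPB]
  rcases eq_or_ne i j with hij | hij
  · subst hij
    exact Finset.sum_eq_zero fun k _ => S_self12 _ _
  -- the case i ≠ j
  have hC : lam i - lam j ≠ 0 := sub_ne_zero.mpr (hdist i j hij)
  -- closed forms for the summands
  have hfi : Strip (Dfun lam a i i) (Dfun lam a j i) (a i)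
      = (∑ l ∈ (Finset.univ.erase i).erase j,
          Strip (a l) (a j) (a i) * (lam l - lam i)⁻¹) * (lam i - lam j)⁻¹ := by
    have h1 : Dfun lam a i i = fun δ =>
        ∑ l ∈ Finset.univ.filter (· ≠ i), a l δ * (lam l - lam i)⁻¹ := by
      funext δ; simp [Dfun]
    have h2 : Dfun lam a j i = fun δ => a j δ * (lam i - lam j)⁻¹ := by
      funext δ; simp [Dfun, hij]
    rw [h1, h2, S_mulc_mid, S_sum_left]
    congr 1
    simp only [S_mulc_left]
    rw [show Finset.univ.filter (· ≠ i) = Finset.univ.erase i from Finset.filter_ne' _ _]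
    exact (Finset.sum_erase _ (by rw [S_self12, zero_mul])).symm
  have hfj : Strip (Dfun lam a i j) (Dfun lam a j j) (a j)
      = (∑ l ∈ (Finset.univ.erase i).erase j,
          Strip (a i) (a l) (a j) * (lam l - lam j)⁻¹) * (lam j - lam i)⁻¹ := by
    have h1 : Dfun lam a j j = fun δ =>
        ∑ l ∈ Finset.univ.filter (· ≠ j), a l δ * (lam l - lam j)⁻¹ := by
      funext δ; simp [Dfun]
    have h2 : Dfun lam a i j = fun δ => a i δ * (lam j - lam i)⁻¹ := by
      funext δ; simp [Dfun, Ne.symm hij]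
    rw [h1, h2, S_swap12, S_mulc_mid, S_sum_left]
    simp only [S_mulc_left]
    rw [show Finset.univ.filter (· ≠ j) = Finset.univ.erase j from Finset.filter_ne' _ _,
      ← neg_mul]
    congr 1
    have hsw : ∀ x : Fin N, -(Strip (a x) (a i) (a j) * (lam x - lam j)⁻¹)
        = Strip (a i) (a x) (a j) * (lam x - lam j)⁻¹ := fun x => by
      rw [S_swap12 (a i) (a x)]; ring
    calc -∑ x ∈ Finset.univ.erase j, Strip (a x) (a i) (a j) * (lam x - lam j)⁻¹
        = ∑ x ∈ Finset.univ.erase j, Strip (a i) (a x) (a j) * (lam x - lam j)⁻¹ := by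
          rw [← Finset.sum_neg_distrib]
          exact Finset.sum_congr rfl fun x _ => hsw x
      _ = ∑ x ∈ (Finset.univ.erase j).erase i,
            Strip (a i) (a x) (a j) * (lam x - lam j)⁻¹ :=
          (Finset.sum_erase _ (by rw [S_self12, zero_mul])).symm
      _ = ∑ l ∈ (Finset.univ.erase i).erase j,
            Strip (a i) (a l) (a j) * (lam l - lam j)⁻¹ := by
          rw [Finset.erase_right_comm]
  have hfk : ∀ k : Fin N, k ≠ i → k ≠ j →
      Strip (Dfun lam a i k) (Dfun lam a j k) (a k)
        = Strip (a i) (a j) (a k) * ((lam k - lam i)⁻¹ * (lam k - lam j)⁻¹) := by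
    intro k hki hkj
    have h1 : Dfun lam a i k = fun δ => a i δ * (lam k - lam i)⁻¹ := by
      funext δ; simp [Dfun, hki]
    have h2 : Dfun lam a j k = fun δ => a j δ * (lam k - lam j)⁻¹ := by
      funext δ; simp [Dfun, hkj]
    rw [h1, h2, S_mulc_mid, S_mulc_left, mul_assoc]
  -- split the sum over k into k = i, k = j, and the rest
  rw [← Finset.add_sum_erase _ _ (Finset.mem_univ i),
    ← Finset.add_sum_erase _ _ (Finset.mem_erase.mpr ⟨Ne.symm hij, Finset.mem_univ j⟩),
    hfi, hfj,
    Finset.sum_congr rfl (fun k hk => hfk k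
      (Finset.ne_of_mem_erase (Finset.mem_of_mem_erase hk))
      (Finset.ne_of_mem_erase hk))]
  rw [Finset.sum_mul, Finset.sum_mul, ← Finset.sum_add_distrib, ← Finset.sum_add_distrib]
  refine Finset.sum_eq_zero fun k hk => ?_
  have hki : k ≠ i := Finset.ne_of_mem_erase (Finset.mem_of_mem_erase hk)
  have hkj : k ≠ j := Finset.ne_of_mem_erase hk
  have hA : lam k - lam i ≠ 0 := sub_ne_zero.mpr (hdist k i hki)
  have hB : lam k - lam j ≠ 0 := sub_ne_zero.mpr (hdist k j hkj)
  rw [S_swap13 (a k) (a j) (a i), S_swap23 (a i) (a k) (a j)]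
  have hD : lam j - lam i ≠ 0 := sub_ne_zero.mpr (hdist j i (Ne.symm hij))
  set t := Strip (a i) (a j) (a k) with ht
  field_simp
  ring
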